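/- Let n ≥ k ≥ 2 be positive integers. Then the probability that a uniformly random graph G on the vertex set [n] (each of the C(n,2) possible edges present independently with probability 1/2) is a k-Ramsey graph equals (-1)^{C(n,k)} · 2^{(1 − C(k,2))·C(n,k)} · Q_{n,k}(1 − 2^{C(k,2) − 1}). Equivalently, the number of k-Ramsey graphs on [n] equals (-1)^{C(n,k)} · 2^{C(n,2) + (1 − C(k,2))·C(n,k)} · Q_{n,k}(1 − 2^{C(k,2)−1}). -/

import Mathlib

open Finset

/-- A graph is `k`-Ramsey if it has no clique of size `k` and no independent set of size `k`. -/
def IsRamseyGraph (k : ℕ) {V : Type*} (G : SimpleGraph V) : Prop :=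
  (¬ ∃ s : Finset V, G.IsNClique k s) ∧ (¬ ∃ s : Finset V, Gᶜ.IsNClique k s)

/-- The set of `k`-element subsets of `[n]`. -/
def ksubsets (n k : ℕ) : Finset (Finset (Fin n)) :=
  Finset.powersetCard k (Finset.univ : Finset (Fin n))

/-- The set `B` of assignments `h` associating to each `k`-element subset `S` of `[n]`
a graph on the vertex set `S` (given by its edge set, a set of `2`-element subsets of `S`)
such that every `|E(h_S)|` is even and every `2`-element subset `e` of `[n]` lies in
`E(h_S)` for an even number of `S`.  An assignment is encoded as a function on all finsets
of `Fin n`, required to be `∅` off the `k`-element subsets. -/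
def RamseyB (n k : ℕ) : Finset (Finset (Fin n) → Finset (Finset (Fin n))) :=
  Finset.univ.filter fun h =>
    (∀ S ∈ ksubsets n k, h S ⊆ Finset.powersetCard 2 S ∧ Even (h S).card) ∧
    (∀ S, S ∉ ksubsets n k → h S = ∅) ∧
    (∀ e ∈ Finset.powersetCard 2 (Finset.univ : Finset (Fin n)),
      Even ((ksubsets n k).filter fun S => e ∈ h S).card)

/-- The polynomial `Q_{n,k}(t) = Σ_{h ∈ B} t^{|Empty(h)|}`, where `Empty(h)` is the set of
`k`-element subsets `S` with `h_S` empty. -/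
noncomputable def Qnk (n k : ℕ) : Polynomial ℤ :=
  ∑ h ∈ RamseyB n k,
    Polynomial.X ^ ((ksubsets n k).filter fun S => h S = ∅).card

/-! ### Auxiliary definitions for the proof -/

open scoped Classical

/-- All 2-element subsets of `Fin n`. -/
def pE (n : ℕ) : Finset (Finset (Fin n)) := Finset.powersetCard 2 Finset.univ

/-- The ±1 sign of an edge with respect to an edge set `W`. -/
noncomputable def xsg {n : ℕ} (W : Finset (Finset (Fin n))) (e : Finset (Fin n)) : ℝ :=
  if e ∈ W then 1 else -1

/-- Even-cardinality subsets of the 2-subsets of `S`. -/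
noncomputable def evens {n : ℕ} (S : Finset (Fin n)) : Finset (Finset (Finset (Fin n))) :=
  (Finset.powersetCard 2 S).powerset.filter (fun A => Even A.card)

/-- The coefficient of a term in the expansion of the non-homogeneity indicator. -/
noncomputable def coef (k : ℕ) {n : ℕ} (A : Finset (Finset (Fin n))) : ℝ :=
  if A = ∅ then 1 - 2 * ((2:ℝ)^(k.choose 2))⁻¹ else -(2 * ((2:ℝ)^(k.choose 2))⁻¹)

/-- The predicate " `W` is the edge set of a `k`-Ramsey graph ". -/
def goodW (n k : ℕ) (W : Finset (Finset (Fin n))) : Prop :=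
  ∀ S ∈ ksubsets n k, ¬ (Finset.powersetCard 2 S ⊆ W) ∧ ∃ e ∈ Finset.powersetCard 2 S, e ∈ W

/-- Assignments without the parity condition. -/
noncomputable def B0 (n k : ℕ) : Finset (Finset (Fin n) → Finset (Finset (Fin n))) :=
  Finset.univ.filter fun h =>
    (∀ S ∈ ksubsets n k, h S ∈ evens S) ∧ ∀ S ∉ ksubsets n k, h S = ∅

lemma prodA {n : ℕ} (S : Finset (Fin n)) (W : Finset (Finset (Fin n))) :
    ∏ e ∈ Finset.powersetCard 2 S, (xsg W e + 1)
      = if Finset.powersetCard 2 S ⊆ W then (2:ℝ)^(Finset.powersetCard 2 S).card else 0 := by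
  by_cases h : Finset.powersetCard 2 S ⊆ W
  · rw [if_pos h, ← Finset.prod_const]
    exact Finset.prod_congr rfl fun e he => by simp [xsg, h he]; norm_num
  · rw [if_neg h]
    obtain ⟨e, he, hew⟩ := Finset.not_subset.mp h
    exact Finset.prod_eq_zero he (by simp [xsg, hew])

lemma prodB {n : ℕ} (S : Finset (Fin n)) (W : Finset (Finset (Fin n))) :
    ∏ e ∈ Finset.powersetCard 2 S, (1 - xsg W e)
      = if (∀ e ∈ Finset.powersetCard 2 S, e ∉ W) then (2:ℝ)^(Finset.powersetCard 2 S).card else 0 := by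
  by_cases h : ∀ e ∈ Finset.powersetCard 2 S, e ∉ W
  · rw [if_pos h, ← Finset.prod_const]
    refine Finset.prod_congr rfl fun e he => by simp [xsg, h e he]; ring
  · rw [if_neg h]
    push_neg at h
    obtain ⟨e, he, hew⟩ := h
    exact Finset.prod_eq_zero he (by simp [xsg, hew])

lemma prodC {n : ℕ} (S : Finset (Fin n)) (W : Finset (Finset (Fin n))) :
    ∏ e ∈ Finset.powersetCard 2 S, (xsg W e + 1)
        + ∏ e ∈ Finset.powersetCard 2 S, (1 - xsg W e)
      = 2 * ∑ A ∈ evens S, ∏ e ∈ A, xsg W e := by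
  have h1 : ∏ e ∈ Finset.powersetCard 2 S, (xsg W e + 1)
      = ∑ A ∈ (Finset.powersetCard 2 S).powerset, ∏ e ∈ A, xsg W e := by
    rw [Finset.prod_add]; simp
  have h2 : ∏ e ∈ Finset.powersetCard 2 S, (1 - xsg W e)
      = ∑ A ∈ (Finset.powersetCard 2 S).powerset, (-1)^A.card * ∏ e ∈ A, xsg W e := by
    have hc : ∀ e ∈ Finset.powersetCard 2 S, (1 - xsg W e) = (-(xsg W e) + 1) := fun e _ => by ring
    rw [Finset.prod_congr rfl hc, Finset.prod_add]
    refine Finset.sum_congr rfl fun A hA => ?_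
    have : ∏ i ∈ A, -xsg W i = (-1)^A.card * ∏ e ∈ A, xsg W e := by
      calc ∏ i ∈ A, -xsg W i = ∏ i ∈ A, ((-1) * xsg W i) := by simp
        _ = (-1)^A.card * ∏ e ∈ A, xsg W e := by rw [Finset.prod_mul_distrib, Finset.prod_const]
    simp [this]
  rw [h1, h2, ← Finset.sum_add_distrib, evens, Finset.mul_sum, Finset.sum_filter]
  refine Finset.sum_congr rfl fun A hA => ?_
  rcases Nat.even_or_odd A.card with he | ho
  · rw [if_pos he, he.neg_one_pow]; ring
  · rw [if_neg (by simpa using ho), ho.neg_one_pow]; ring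

lemma L1 {n k : ℕ} (hk : 2 ≤ k) (S : Finset (Fin n)) (hS : S.card = k)
    (W : Finset (Finset (Fin n))) :
    (if (¬ Finset.powersetCard 2 S ⊆ W ∧ ∃ e ∈ Finset.powersetCard 2 S, e ∈ W)
        then (1:ℝ) else 0)
      = ∑ A ∈ evens S, coef k A * ∏ e ∈ A, xsg W e := by
  set r : ℝ := ((2:ℝ)^(k.choose 2))⁻¹ with hrdef
  have hcard : (Finset.powersetCard 2 S).card = k.choose 2 := by
    rw [Finset.card_powersetCard, hS]
  have hm : 0 < k.choose 2 := Nat.choose_pos hk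
  have hr1 : (2:ℝ)^(k.choose 2) * r = 1 := mul_inv_cancel₀ (by positivity)
  have hne : (Finset.powersetCard 2 S).Nonempty := by
    rw [← Finset.card_pos, hcard]; exact hm
  have hrhs : ∑ A ∈ evens S, coef k A * ∏ e ∈ A, xsg W e
      = 1 - r * (∏ e ∈ Finset.powersetCard 2 S, (xsg W e + 1)
          + ∏ e ∈ Finset.powersetCard 2 S, (1 - xsg W e)) := by
    rw [prodC]
    have hsplit : ∀ A ∈ evens S, coef k A * ∏ e ∈ A, xsg W e
        = (if A = ∅ then (1:ℝ) else 0) + (-(2 * r)) * ∏ e ∈ A, xsg W e := by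
      intro A hA
      by_cases h : A = ∅
      · subst h; simp [coef]; ring
      · rw [coef, if_neg h, if_neg h]; ring
    rw [Finset.sum_congr rfl hsplit, Finset.sum_add_distrib, Finset.sum_ite_eq' (evens S) ∅ (fun _ => (1:ℝ))]
    have hmem : (∅ : Finset (Finset (Fin n))) ∈ evens S := by
      simp [evens]
    rw [if_pos hmem, ← Finset.mul_sum]
    ring
  rw [hrhs, prodA, prodB, hcard]
  by_cases h1 : Finset.powersetCard 2 S ⊆ W
  · by_cases h2 : ∀ e ∈ Finset.powersetCard 2 S, e ∉ W
    · obtain ⟨e, he⟩ := hne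
      exact absurd (h1 he) (h2 e he)
    · rw [if_pos h1, if_neg h2, if_neg (by tauto)]
      rw [add_zero, mul_comm]
      rw [hr1]; ring
  · by_cases h2 : ∀ e ∈ Finset.powersetCard 2 S, e ∉ W
    · rw [if_neg h1, if_pos h2, if_neg (by push_neg; intro _; exact h2)]
      rw [zero_add, mul_comm, hr1]; ring
    · rw [if_neg h1, if_neg h2, if_pos ⟨h1, by push_neg at h2; exact h2⟩]
      simp

lemma L2 {n k : ℕ} (W : Finset (Finset (Fin n))) :
    ∏ S ∈ ksubsets n k, (∑ A ∈ evens S, coef k A * ∏ e ∈ A, xsg W e)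
      = ∑ h ∈ B0 n k, ∏ S ∈ ksubsets n k, (coef k (h S) * ∏ e ∈ h S, xsg W e) := by
  set t : Finset (Fin n) → Finset (Finset (Finset (Fin n))) :=
    fun S => if S ∈ ksubsets n k then evens S else {∅} with ht
  set f : Finset (Fin n) → Finset (Finset (Fin n)) → ℝ :=
    fun S A => if S ∈ ksubsets n k then coef k A * ∏ e ∈ A, xsg W e else 1 with hf
  have key := Finset.prod_univ_sum t f
  have hL : ∏ S : Finset (Fin n), ∑ A ∈ t S, f S A
      = ∏ S ∈ ksubsets n k, (∑ A ∈ evens S, coef k A * ∏ e ∈ A, xsg W e) := by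
    rw [← Finset.prod_subset (Finset.subset_univ (ksubsets n k))
      (fun S _ hS => by simp [ht, hf, hS])]
    exact Finset.prod_congr rfl fun S hS => by simp [ht, hf, hS]
  have hpi : Fintype.piFinset t = B0 n k := by
    ext h
    simp only [Fintype.mem_piFinset, B0, Finset.mem_filter, Finset.mem_univ, true_and, ht]
    constructor
    · intro hh
      refine ⟨fun S hS => by have := hh S; rwa [if_pos hS] at this,
        fun S hS => by have := hh S; rwa [if_neg hS, Finset.mem_singleton] at this⟩
    · intro ⟨h1, h2⟩ S
      by_cases hS : S ∈ ksubsets n k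
      · rw [if_pos hS]; exact h1 S hS
      · rw [if_neg hS, Finset.mem_singleton]; exact h2 S hS
  have hR : ∀ h ∈ B0 n k, ∏ S : Finset (Fin n), f S (h S)
      = ∏ S ∈ ksubsets n k, (coef k (h S) * ∏ e ∈ h S, xsg W e) := by
    intro h hh
    rw [← Finset.prod_subset (Finset.subset_univ (ksubsets n k))
      (fun S _ hS => by simp [hf, hS])]
    exact Finset.prod_congr rfl fun S hS => by simp [hf, hS]
  rw [← hL, key, hpi]
  exact Finset.sum_congr rfl hR

lemma L3 {n k : ℕ} (h : Finset (Fin n) → Finset (Finset (Fin n))) (hh : h ∈ B0 n k) :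
    ∑ W ∈ (pE n).powerset, ∏ S ∈ ksubsets n k, ∏ e ∈ h S, xsg W e
      = if (∀ e ∈ pE n, Even (((ksubsets n k).filter fun S => e ∈ h S).card))
          then (2:ℝ)^((pE n).card) else 0 := by
  -- h S ⊆ pE n for S ∈ ksubsets
  have hsub : ∀ S ∈ ksubsets n k, h S ⊆ pE n := by
    intro S hS
    rw [B0, Finset.mem_filter] at hh
    have h1 := hh.2.1 S hS
    rw [evens, Finset.mem_filter, Finset.mem_powerset] at h1
    exact h1.1.trans (Finset.powersetCard_mono (Finset.subset_univ S))
  set D : Finset (Fin n) → ℕ := fun e => ((ksubsets n k).filter fun S => e ∈ h S).card with hD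
  -- rewrite the summand
  have hsummand : ∀ W ∈ (pE n).powerset,
      ∏ S ∈ ksubsets n k, ∏ e ∈ h S, xsg W e
        = (∏ e ∈ W, (1:ℝ)) * ∏ e ∈ pE n \ W, (-1:ℝ)^(D e) := by
    intro W hW
    rw [Finset.mem_powerset] at hW
    have step1 : ∀ S ∈ ksubsets n k, ∏ e ∈ h S, xsg W e
        = ∏ e ∈ pE n, (if e ∈ h S then xsg W e else 1) := by
      intro S hS
      rw [Finset.prod_ite_mem, Finset.inter_eq_right.mpr (hsub S hS)]
    rw [Finset.prod_congr rfl step1, Finset.prod_comm]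
    have step2 : ∀ e ∈ pE n, ∏ S ∈ ksubsets n k, (if e ∈ h S then xsg W e else 1)
        = (xsg W e)^(D e) := by
      intro e he
      rw [hD, ← Finset.prod_const, Finset.prod_filter]
    rw [Finset.prod_congr rfl step2]
    rw [← Finset.prod_sdiff hW, mul_comm]
    congr 1
    · exact Finset.prod_congr rfl fun e he => by
        rw [show xsg W e = 1 from if_pos he, one_pow]
    · exact Finset.prod_congr rfl fun e he => by
        rw [show xsg W e = -1 from if_neg (Finset.mem_sdiff.mp he).2]
  rw [Finset.sum_congr rfl hsummand, ← Finset.prod_add (fun _ => (1:ℝ)) (fun e => (-1:ℝ)^(D e)) (pE n)]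
  have hfac : ∀ e ∈ pE n, (1:ℝ) + (-1)^(D e) = if Even (D e) then 2 else 0 := by
    intro e he
    rcases Nat.even_or_odd (D e) with hev | hod
    · rw [if_pos hev, hev.neg_one_pow]; norm_num
    · rw [if_neg (by simpa using hod), hod.neg_one_pow]; norm_num
  rw [Finset.prod_congr rfl hfac]
  by_cases hall : ∀ e ∈ pE n, Even (D e)
  · rw [if_pos hall, ← Finset.prod_const]
    exact Finset.prod_congr rfl fun e he => if_pos (hall e he)
  · rw [if_neg hall]
    push_neg at hall
    obtain ⟨e, he, hne⟩ := hall
    exact Finset.prod_eq_zero he (if_neg hne)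

lemma L4 {n k : ℕ} :
    (B0 n k).filter
        (fun h => ∀ e ∈ pE n, Even (((ksubsets n k).filter fun S => e ∈ h S).card))
      = RamseyB n k := by
  ext h
  simp only [B0, RamseyB, pE, evens, Finset.mem_filter, Finset.mem_univ, true_and,
    Finset.mem_powerset]
  tauto

lemma L5 {n k : ℕ} (hk : 2 ≤ k) (hkn : k ≤ n) (h : Finset (Fin n) → Finset (Finset (Fin n)))
    (hh : h ∈ RamseyB n k) :
    ∏ S ∈ ksubsets n k, coef k (h S)
      = (-(2 * ((2:ℝ)^(k.choose 2))⁻¹))^(n.choose k)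
          * ((1:ℝ) - 2^(k.choose 2 - 1))^(((ksubsets n k).filter fun S => h S = ∅).card) := by
  set r : ℝ := ((2:ℝ)^(k.choose 2))⁻¹ with hrdef
  set t : ℝ := (1:ℝ) - 2^(k.choose 2 - 1) with htdef
  have hm : 0 < k.choose 2 := Nat.choose_pos hk
  have hkey : (1:ℝ) - 2 * r = (-(2 * r)) * t := by
    have h2m : (2:ℝ) * 2^(k.choose 2 - 1) = 2^(k.choose 2) := by
      rw [← pow_succ']
      congr 1
      omega
    have : (2:ℝ)^(k.choose 2) * r = 1 := mul_inv_cancel₀ (by positivity)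
    rw [htdef]
    calc (1:ℝ) - 2 * r = (2:ℝ)^(k.choose 2) * r - 2 * r := by rw [this]
      _ = (-(2*r)) * (1 - 2^(k.choose 2 - 1)) := by rw [← h2m]; ring
  have hcK : (ksubsets n k).card = n.choose k := by
    rw [ksubsets, Finset.card_powersetCard, Finset.card_univ, Fintype.card_fin]
  set E := ((ksubsets n k).filter fun S => h S = ∅) with hE
  have hEsub : E ⊆ ksubsets n k := Finset.filter_subset _ _
  rw [← Finset.prod_sdiff hEsub]
  have h1 : ∏ S ∈ E, coef k (h S) = ((-(2*r)) * t)^E.card := by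
    rw [← hkey, ← Finset.prod_const]
    refine Finset.prod_congr rfl fun S hS => ?_
    rw [coef, if_pos (Finset.mem_filter.mp hS).2]
  have h2 : ∏ S ∈ ksubsets n k \ E, coef k (h S) = (-(2*r))^(ksubsets n k \ E).card := by
    rw [← Finset.prod_const]
    refine Finset.prod_congr rfl fun S hS => ?_
    rw [coef, if_neg]
    have := Finset.mem_sdiff.mp hS
    simpa [hE, this.1] using this.2
  rw [h1, h2, Finset.card_sdiff_of_subset hEsub, hcK, mul_pow]
  have hle : E.card ≤ n.choose k := by rw [← hcK]; exact Finset.card_le_card hEsub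
  rw [← mul_assoc, ← pow_add]
  congr 2
  omega

noncomputable def Phi {n : ℕ} (G : SimpleGraph (Fin n)) : Finset (Finset (Fin n)) :=
  (pE n).filter (fun e => G.IsClique (e : Set (Fin n)))

lemma pair_mem_powersetCard {n : ℕ} {a b : Fin n} {S : Finset (Fin n)} (ha : a ∈ S)
    (hb : b ∈ S) (hab : a ≠ b) : ({a, b} : Finset (Fin n)) ∈ Finset.powersetCard 2 S := by
  rw [Finset.mem_powersetCard]
  exact ⟨Finset.insert_subset ha (Finset.singleton_subset_iff.mpr hb), Finset.card_pair hab⟩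

lemma clique_iff {n : ℕ} (G : SimpleGraph (Fin n)) (S : Finset (Fin n)) :
    Finset.powersetCard 2 S ⊆ Phi G ↔ G.IsClique (S : Set (Fin n)) := by
  constructor
  · intro h
    rw [SimpleGraph.isClique_iff]
    intro a ha b hb hab
    have hm := h (pair_mem_powersetCard ha hb hab)
    rw [Phi, Finset.mem_filter] at hm
    have := hm.2
    rw [Finset.coe_insert, Finset.coe_singleton] at this
    exact (SimpleGraph.isClique_pair.mp this) hab
  · intro h e he
    rw [Finset.mem_powersetCard] at he
    rw [Phi, Finset.mem_filter, pE, Finset.mem_powersetCard]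
    exact ⟨⟨Finset.subset_univ e, he.2⟩, h.subset (Finset.coe_subset.mpr he.1)⟩

lemma indep_iff {n : ℕ} (G : SimpleGraph (Fin n)) (S : Finset (Fin n)) :
    (∀ e ∈ Finset.powersetCard 2 S, e ∉ Phi G) ↔ Gᶜ.IsClique (S : Set (Fin n)) := by
  constructor
  · intro h
    rw [SimpleGraph.isClique_iff]
    intro a ha b hb hab
    rw [SimpleGraph.compl_adj]
    refine ⟨hab, fun hadj => ?_⟩
    exact h _ (pair_mem_powersetCard ha hb hab) (by
      rw [Phi, Finset.mem_filter, pE, Finset.mem_powersetCard]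
      refine ⟨⟨Finset.subset_univ _, Finset.card_pair hab⟩, ?_⟩
      rw [Finset.coe_insert, Finset.coe_singleton]
      exact SimpleGraph.isClique_pair.mpr (fun _ => hadj))
  · intro h e he hmem
    rw [Finset.mem_powersetCard] at he
    obtain ⟨a, b, hab, rfl⟩ := Finset.card_eq_two.mp he.2
    rw [Phi, Finset.mem_filter, Finset.coe_insert, Finset.coe_singleton] at hmem
    have hadj := SimpleGraph.isClique_pair.mp hmem.2 hab
    have ha : a ∈ S := he.1 (by simp)
    have hb : b ∈ S := he.1 (by simp)
    exact ((h ha hb hab).2) hadj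

lemma ramsey_iff_good {n k : ℕ} (G : SimpleGraph (Fin n)) :
    IsRamseyGraph k G ↔ goodW n k (Phi G) := by
  rw [IsRamseyGraph, goodW]
  constructor
  · intro ⟨h1, h2⟩ S hS
    rw [ksubsets, Finset.mem_powersetCard_univ] at hS
    constructor
    · intro hsub
      exact h1 ⟨S, (clique_iff G S).mp hsub, hS⟩
    · by_contra hcon
      push_neg at hcon
      exact h2 ⟨S, (indep_iff G S).mp hcon, hS⟩
  · intro h
    constructor
    · rintro ⟨S, hS⟩
      have hmem : S ∈ ksubsets n k := by
        rw [ksubsets, Finset.mem_powersetCard_univ]; exact hS.2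
      exact (h S hmem).1 ((clique_iff G S).mpr hS.1)
    · rintro ⟨S, hS⟩
      have hmem : S ∈ ksubsets n k := by
        rw [ksubsets, Finset.mem_powersetCard_univ]; exact hS.2
      obtain ⟨e, he, hew⟩ := (h S hmem).2
      exact (indep_iff G S).mpr hS.1 e he hew

lemma count_eq (n k : ℕ) :
    Nat.card {G : SimpleGraph (Fin n) // IsRamseyGraph k G}
      = (((pE n).powerset).filter (goodW n k)).card := by
  rw [Nat.card_eq_fintype_card, Fintype.card_subtype]
  refine Finset.card_bij (fun G _ => Phi G) ?_ ?_ ?_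
  · intro G hG
    rw [Finset.mem_filter] at hG ⊢
    exact ⟨Finset.mem_powerset.mpr (Finset.filter_subset _ _),
      (ramsey_iff_good G).mp hG.2⟩
  · intro G hG G' hG' heq
    replace heq : Phi G = Phi G' := heq
    ext a b
    constructor
    · intro hadj
      have hab := G.ne_of_adj hadj
      have h1 : ({a,b} : Finset (Fin n)) ∈ Phi G := by
        rw [Phi, Finset.mem_filter, pE, Finset.mem_powersetCard]
        refine ⟨⟨Finset.subset_univ _, Finset.card_pair hab⟩, ?_⟩
        rw [Finset.coe_insert, Finset.coe_singleton]
        exact SimpleGraph.isClique_pair.mpr (fun _ => hadj)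
      rw [heq, Phi, Finset.mem_filter, Finset.coe_insert, Finset.coe_singleton] at h1
      exact SimpleGraph.isClique_pair.mp h1.2 hab
    · intro hadj
      have hab := G'.ne_of_adj hadj
      have h1 : ({a,b} : Finset (Fin n)) ∈ Phi G' := by
        rw [Phi, Finset.mem_filter, pE, Finset.mem_powersetCard]
        refine ⟨⟨Finset.subset_univ _, Finset.card_pair hab⟩, ?_⟩
        rw [Finset.coe_insert, Finset.coe_singleton]
        exact SimpleGraph.isClique_pair.mpr (fun _ => hadj)
      rw [← heq, Phi, Finset.mem_filter, Finset.coe_insert, Finset.coe_singleton] at h1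
      exact SimpleGraph.isClique_pair.mp h1.2 hab
  · intro W hW
    rw [Finset.mem_filter, Finset.mem_powerset] at hW
    set G : SimpleGraph (Fin n) :=
      { Adj := fun a b => a ≠ b ∧ ({a, b} : Finset (Fin n)) ∈ W
        symm := ⟨by
          intro a b ⟨hab, hm⟩
          exact ⟨hab.symm, by rwa [Finset.pair_comm]⟩⟩
        loopless := ⟨fun a h => h.1 rfl⟩ } with hGdef
    have hPhi : Phi G = W := by
      ext e
      simp only [Phi, Finset.mem_filter, pE, Finset.mem_powersetCard]
      constructor
      · rintro ⟨⟨-, hcard⟩, hcl⟩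
        obtain ⟨a, b, hab, rfl⟩ := Finset.card_eq_two.mp hcard
        rw [Finset.coe_insert, Finset.coe_singleton] at hcl
        exact (SimpleGraph.isClique_pair.mp hcl hab).2
      · intro heW
        have hpe := hW.1 heW
        rw [pE, Finset.mem_powersetCard] at hpe
        obtain ⟨a, b, hab, rfl⟩ := Finset.card_eq_two.mp hpe.2
        refine ⟨⟨Finset.subset_univ _, hpe.2⟩, ?_⟩
        rw [Finset.coe_insert, Finset.coe_singleton]
        exact SimpleGraph.isClique_pair.mpr (fun _ => ⟨hab, heW⟩)
    refine ⟨G, ?_, hPhi⟩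
    rw [Finset.mem_filter]
    exact ⟨Finset.mem_univ _, (ramsey_iff_good G).mpr (by rw [hPhi]; exact hW.2)⟩

lemma L6 {n k : ℕ} :
    Polynomial.aeval ((1:ℝ) - 2^(k.choose 2 - 1)) (Qnk n k)
      = ∑ h ∈ RamseyB n k,
          ((1:ℝ) - 2^(k.choose 2 - 1))^(((ksubsets n k).filter fun S => h S = ∅).card) := by
  simp [Qnk]

lemma master_count {n k : ℕ} (hk : 2 ≤ k) (hkn : k ≤ n) :
    (((((pE n).powerset).filter (goodW n k)).card : ℝ))
      = (2:ℝ)^(n.choose 2) * ((-(2 * ((2:ℝ)^(k.choose 2))⁻¹))^(n.choose k) *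
          Polynomial.aeval ((1:ℝ) - 2^(k.choose 2 - 1)) (Qnk n k)) := by
  have hpEcard : (pE n).card = n.choose 2 := by
    rw [pE, Finset.card_powersetCard, Finset.card_univ, Fintype.card_fin]
  have step0 : (((((pE n).powerset).filter (goodW n k)).card : ℝ))
      = ∑ W ∈ (pE n).powerset, if goodW n k W then (1:ℝ) else 0 :=
    (Finset.sum_boole _ _).symm
  have step1 : ∀ W ∈ (pE n).powerset, (if goodW n k W then (1:ℝ) else 0)
      = ∏ S ∈ ksubsets n k,
          (if (¬ Finset.powersetCard 2 S ⊆ W ∧ ∃ e ∈ Finset.powersetCard 2 S, e ∈ W)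
            then (1:ℝ) else 0) := by
    intro W _
    by_cases h : goodW n k W
    · rw [if_pos h]
      exact (Finset.prod_eq_one fun S hS => if_pos (h S hS)).symm
    · rw [if_neg h]
      rw [goodW] at h
      push_neg at h
      obtain ⟨S, hS, hP⟩ := h
      refine (Finset.prod_eq_zero hS ?_).symm
      rw [if_neg]
      rintro ⟨hns, e, he, hew⟩
      exact (hP hns) e he hew
  rw [step0, Finset.sum_congr rfl step1]
  have step2 : ∀ W ∈ (pE n).powerset,
      ∏ S ∈ ksubsets n k,
          (if (¬ Finset.powersetCard 2 S ⊆ W ∧ ∃ e ∈ Finset.powersetCard 2 S, e ∈ W)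
            then (1:ℝ) else 0)
        = ∑ h ∈ B0 n k, ∏ S ∈ ksubsets n k, (coef k (h S) * ∏ e ∈ h S, xsg W e) := by
    intro W _
    rw [← L2 W]
    refine Finset.prod_congr rfl fun S hS => ?_
    exact L1 hk S (Finset.mem_powersetCard_univ.mp hS) W
  rw [Finset.sum_congr rfl step2, Finset.sum_comm]
  have step3 : ∀ h ∈ B0 n k,
      ∑ W ∈ (pE n).powerset, ∏ S ∈ ksubsets n k, (coef k (h S) * ∏ e ∈ h S, xsg W e)
        = (∏ S ∈ ksubsets n k, coef k (h S)) *
            (if (∀ e ∈ pE n, Even (((ksubsets n k).filter fun S => e ∈ h S).card))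
              then (2:ℝ)^((pE n).card) else 0) := by
    intro h hh
    rw [← L3 h hh, Finset.mul_sum]
    refine Finset.sum_congr rfl fun W _ => ?_
    rw [Finset.prod_mul_distrib]
  rw [Finset.sum_congr rfl step3]
  have step4 : ∑ h ∈ B0 n k, (∏ S ∈ ksubsets n k, coef k (h S)) *
        (if (∀ e ∈ pE n, Even (((ksubsets n k).filter fun S => e ∈ h S).card))
          then (2:ℝ)^((pE n).card) else 0)
      = ∑ h ∈ RamseyB n k, (2:ℝ)^((pE n).card) * ∏ S ∈ ksubsets n k, coef k (h S) := by
    rw [← L4]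
    simp only [Finset.sum_filter]
    refine Finset.sum_congr rfl fun h _ => ?_
    by_cases hp : (∀ e ∈ pE n, Even (((ksubsets n k).filter fun S => e ∈ h S).card))
    · rw [if_pos hp, if_pos hp]; ring
    · rw [if_neg hp, if_neg hp]; ring
  rw [step4, hpEcard, ← Finset.mul_sum, L6]
  congr 1
  rw [Finset.mul_sum]
  exact Finset.sum_congr rfl fun h hh => L5 hk hkn h hh



theorem stmt_9 (n k : ℕ) (hk : 2 ≤ k) (hkn : k ≤ n) :
    (Nat.card {G : SimpleGraph (Fin n) // IsRamseyGraph k G} : ℝ) / 2 ^ (n.choose 2) =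
        (-1 : ℝ) ^ (n.choose k) *
          (2 : ℝ) ^ ((1 - (k.choose 2 : ℤ)) * (n.choose k : ℤ)) *
          Polynomial.aeval ((1 : ℝ) - 2 ^ (k.choose 2 - 1)) (Qnk n k) ∧
      (Nat.card {G : SimpleGraph (Fin n) // IsRamseyGraph k G} : ℝ) =
        (-1 : ℝ) ^ (n.choose k) *
          (2 : ℝ) ^ ((n.choose 2 : ℤ) + (1 - (k.choose 2 : ℤ)) * (n.choose k : ℤ)) *
          Polynomial.aeval ((1 : ℝ) - 2 ^ (k.choose 2 - 1)) (Qnk n k) := by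
  have hcast : (Nat.card {G : SimpleGraph (Fin n) // IsRamseyGraph k G} : ℝ)
      = (((((pE n).powerset).filter (goodW n k)).card : ℝ)) := by
    rw [count_eq n k]
  have hm := master_count (n := n) (k := k) hk hkn
  rw [hcast]
  have hKpow : (-(2 * ((2:ℝ)^(k.choose 2))⁻¹))^(n.choose k)
      = (-1:ℝ)^(n.choose k) * (2:ℝ)^((1 - (k.choose 2:ℤ)) * (n.choose k:ℤ)) := by
    have h2 : (2:ℝ) ^ ((1:ℤ) - (k.choose 2:ℤ)) = 2 * ((2:ℝ)^(k.choose 2))⁻¹ := by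
      rw [zpow_sub₀ (two_ne_zero), zpow_one, zpow_natCast]
      ring
    calc (-(2 * ((2:ℝ)^(k.choose 2))⁻¹))^(n.choose k)
        = (-1:ℝ)^(n.choose k) * (2 * ((2:ℝ)^(k.choose 2))⁻¹)^(n.choose k) := by
          rw [← neg_one_mul, mul_pow]
      _ = (-1:ℝ)^(n.choose k) * ((2:ℝ) ^ ((1:ℤ) - (k.choose 2:ℤ)))^(n.choose k) := by rw [h2]
      _ = (-1:ℝ)^(n.choose k) * (2:ℝ)^((1 - (k.choose 2:ℤ)) * (n.choose k:ℤ)) := by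
          rw [← zpow_natCast ((2:ℝ) ^ ((1:ℤ) - (k.choose 2:ℤ))), ← zpow_mul]
  have h2C : ((2:ℝ))^(n.choose 2) ≠ 0 := by positivity
  constructor
  · rw [hm, hKpow]
    field_simp
  · rw [hm, hKpow, zpow_add₀ (two_ne_zero), zpow_natCast]
    ring
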